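/- Let P and Q be probability measures on a common measurable space. Then KL(P, (P+Q)/2) ≥ (2 log 2 − 1) · H²(P, Q), where (P+Q)/2 is the mixture measure. Moreover, whenever P is absolutely continuous with respect to Q, 2 H²(P, Q) ≤ KL(P, Q). -/

import Mathlib

open MeasureTheory ENNReal

-- Kullback–Leibler divergence `KL(P,Q) = ∫ log(dP/dQ) dP`, set to `+∞` when `P`
-- is not absolutely continuous w.r.t. `Q` or when the integrand is not integrable.
open Classical in
noncomputable def klDiv' {Ω : Type*} [MeasurableSpace Ω] (P Q : Measure Ω) : ℝ≥0∞ :=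
  if P ≪ Q ∧ Integrable (fun ω => Real.log ((P.rnDeriv Q ω).toReal)) P then
    ENNReal.ofReal (∫ ω, Real.log ((P.rnDeriv Q ω).toReal) ∂P)
  else ∞

/-- Squared Hellinger distance `H²(P,Q) = (1/2) ∫ (√(dP/dμ) − √(dQ/dμ))² dμ`,
computed with the dominating measure `μ = P + Q`. -/
noncomputable def sqHellinger {Ω : Type*} [MeasurableSpace Ω] (P Q : Measure Ω) : ℝ :=
  (1 / 2) * ∫ ω, (Real.sqrt ((P.rnDeriv (P + Q) ω).toReal) -
    Real.sqrt ((Q.rnDeriv (P + Q) ω).toReal)) ^ 2 ∂(P + Q)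

/-- For `t ≥ 1`, `log t ≤ (t² - 1)/(2t)`. -/
lemma log_le_sq_sub_one {t : ℝ} (ht : 1 ≤ t) : Real.log t ≤ (t^2 - 1)/(2*t) := by
  have h0 : (0:ℝ) < t := lt_of_lt_of_le one_pos ht
  set g : ℝ → ℝ := fun x => x/2 - (2*x)⁻¹ - Real.log x with hg
  have hd : ∀ x : ℝ, 0 < x → HasDerivAt g (1/2 + 2*(2*x)⁻¹^2 - x⁻¹) x := by
    intro x hx
    have h1 : HasDerivAt (fun y : ℝ => y/2) (1/2) x := by
      simpa using (hasDerivAt_id x).div_const 2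
    have h2 : HasDerivAt (fun y : ℝ => 2*y) 2 x := by
      simpa using (hasDerivAt_id x).const_mul 2
    have h2' : HasDerivAt (fun y : ℝ => (2*y)⁻¹) (-2 / (2*x)^2) x :=
      h2.inv (by positivity)
    have h3 : HasDerivAt Real.log x⁻¹ x := Real.hasDerivAt_log (ne_of_gt hx)
    have := (h1.sub h2').sub h3
    refine this.congr_deriv ?_
    ring
  have hmono : MonotoneOn g (Set.Ici 1) := by
    refine monotoneOn_of_deriv_nonneg (convex_Ici 1) ?_ ?_ ?_
    · intro x hx
      exact (hd x (lt_of_lt_of_le one_pos hx)).continuousAt.continuousWithinAt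
    · intro x hx
      rw [interior_Ici] at hx
      exact ((hd x (lt_trans one_pos hx)).differentiableAt).differentiableWithinAt
    · intro x hx
      rw [interior_Ici] at hx
      have hx0 : (0:ℝ) < x := lt_trans one_pos hx
      rw [(hd x hx0).deriv]
      have e1 : (2*x)⁻¹^2 = (x⁻¹)^2/4 := by
        field_simp
        ring
      rw [Set.mem_Ioi] at hx
      have e2 : x⁻¹ ≤ 1 := by
        rw [inv_le_one_iff₀]; right; exact le_of_lt hx
      nlinarith [sq_nonneg (x⁻¹ - 1), inv_pos.mpr hx0]
  have h1 : g 1 ≤ g t := hmono (by simp) (by simpa using ht) ht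
  have hg1 : g 1 = 0 := by simp [hg]
  have : 0 ≤ t/2 - (2*t)⁻¹ - Real.log t := by rw [← hg1]; exact h1
  have e : t/2 - (2*t)⁻¹ = (t^2-1)/(2*t) := by field_simp
  linarith [e ▸ this]

/-- For `0 < x ≤ 1`, `(x² - 1)/(2x) ≤ log x`. -/
lemma sq_sub_one_le_log {x : ℝ} (hx : 0 < x) (hx1 : x ≤ 1) : (x^2 - 1)/(2*x) ≤ Real.log x := by
  have hxi : 1 ≤ x⁻¹ := by
    rw [one_le_inv_iff₀]; exact ⟨hx, hx1⟩
  have h := log_le_sq_sub_one hxi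
  rw [Real.log_inv] at h
  have e : ((x⁻¹)^2 - 1)/(2*x⁻¹) = -((x^2-1)/(2*x)) := by
    field_simp
    ring
  rw [e] at h
  linarith

/-- For `v ≥ 0`, 4th-order alternating Taylor lower bound for `log (1+v)`. -/
lemma taylor_le_log_one_add {v : ℝ} (hv : 0 ≤ v) :
    v - v^2/2 + v^3/3 - v^4/4 ≤ Real.log (1+v) := by
  set g : ℝ → ℝ := fun x => Real.log (1+x) - (x - x^2/2 + x^3/3 - x^4/4) with hg
  have hd : ∀ x : ℝ, 0 ≤ x → HasDerivAt g ((1+x)⁻¹ - (1 - x + x^2 - x^3)) x := by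
    intro x hx
    have h1x : (0:ℝ) < 1 + x := by linarith
    have h1 : HasDerivAt (fun y : ℝ => 1 + y) 1 x := by
      simpa using (hasDerivAt_id x).const_add 1
    have h2 : HasDerivAt (fun y : ℝ => Real.log (1+y)) (1+x)⁻¹ x := by
      exact ((Real.hasDerivAt_log (ne_of_gt h1x)).comp x h1).congr_deriv (mul_one _)
    have h3 : HasDerivAt (fun y : ℝ => y - y^2/2 + y^3/3 - y^4/4) (1 - x + x^2 - x^3) x := by
      have p1 := hasDerivAt_id x
      have p2 := (hasDerivAt_pow 2 x).div_const 2
      have p3 := (hasDerivAt_pow 3 x).div_const 3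
      have p4 := (hasDerivAt_pow 4 x).div_const 4
      have := ((p1.sub p2).add p3).sub p4
      refine this.congr_deriv ?_
      push_cast
      ring
    exact h2.sub h3
  have hmono : MonotoneOn g (Set.Ici 0) := by
    refine monotoneOn_of_deriv_nonneg (convex_Ici 0) ?_ ?_ ?_
    · intro x hx
      exact (hd x hx).continuousAt.continuousWithinAt
    · intro x hx
      rw [interior_Ici] at hx
      exact ((hd x (le_of_lt hx)).differentiableAt).differentiableWithinAt
    · intro x hx
      rw [interior_Ici, Set.mem_Ioi] at hx
      rw [(hd x (le_of_lt hx)).deriv]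
      have h1x : (0:ℝ) < 1 + x := by linarith
      have e : (1+x)⁻¹ - (1 - x + x^2 - x^3) = x^4/(1+x) := by
        field_simp [h1x.ne']
        ring
      rw [e]
      positivity
  have h1 : g 0 ≤ g v := hmono (by simp) (by simpa using hv) hv
  have hg0 : g 0 = 0 := by simp [hg]
  rw [hg0] at h1
  simp only [hg] at h1
  linarith

/-- Pointwise inequality for the second claim: for `p ≥ 0`, `q > 0`,
`(√p − √q)² ≤ p log(p/q) + q − p`. -/
lemma pointwise_two {p q : ℝ} (hp : 0 ≤ p) (hq : 0 < q) :
    (Real.sqrt p - Real.sqrt q)^2 ≤ p * Real.log (p/q) + q - p := by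
  rcases eq_or_lt_of_le hp with h0 | hp0
  · rw [← h0]
    simp only [Real.sqrt_zero, zero_mul, zero_sub, sub_zero, zero_add]
    rw [neg_sq, Real.sq_sqrt hq.le]
  · have hsp : 0 < Real.sqrt p := Real.sqrt_pos.mpr hp0
    have hsq : 0 < Real.sqrt q := Real.sqrt_pos.mpr hq
    have hps : Real.sqrt p ^ 2 = p := Real.sq_sqrt hp0.le
    have hqs : Real.sqrt q ^ 2 = q := Real.sq_sqrt hq.le
    have hlog : Real.log (Real.sqrt q / Real.sqrt p) ≤ Real.sqrt q / Real.sqrt p - 1 :=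
      Real.log_le_sub_one_of_pos (by positivity)
    have hlq : Real.log (Real.sqrt q / Real.sqrt p) = Real.log q / 2 - Real.log p / 2 := by
      rw [Real.log_div (ne_of_gt hsq) (ne_of_gt hsp), Real.log_sqrt hq.le, Real.log_sqrt hp0.le]
    have hlpq : Real.log (p/q) = Real.log p - Real.log q :=
      Real.log_div (ne_of_gt hp0) (ne_of_gt hq)
    -- p * log(p/q) ≥ 2p − 2√p√q
    have h1 : 2 - 2*(Real.sqrt q / Real.sqrt p) ≤ Real.log (p/q) := by
      rw [hlpq]; linarith [hlog, hlq.symm.le, hlq.le]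
    have h2 : p * (2 - 2*(Real.sqrt q / Real.sqrt p)) ≤ p * Real.log (p/q) :=
      mul_le_mul_of_nonneg_left h1 hp0.le
    have h3 : p * (2 - 2*(Real.sqrt q / Real.sqrt p)) = 2*p - 2*(Real.sqrt p * Real.sqrt q) := by
      rw [← hps]
      field_simp
      rw [Real.sqrt_sq hsp.le]; ring
    have hexp : (Real.sqrt p - Real.sqrt q)^2 = p + q - 2*(Real.sqrt p * Real.sqrt q) := by
      rw [sub_sq, hps, hqs]; ring
    linarith [h3 ▸ h2]

set_option maxHeartbeats 1600000 in
/-- Pointwise inequality for the first claim: for `p, q ≥ 0` with `p + q = 1`,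
`(2 log 2 − 1)/2 · (√p − √q)² ≤ p log(2p) + 1/2 − p`. -/
lemma pointwise_one {p q : ℝ} (hp : 0 ≤ p) (hq : 0 ≤ q) (hpq : p + q = 1) :
    (2*Real.log 2 - 1)/2 * (Real.sqrt p - Real.sqrt q)^2 ≤ p * Real.log (2*p) + 1/2 - p := by
  have hl2a : Real.log 2 < 0.6931471808 := Real.log_two_lt_d9
  have hl2b : 0.6931471803 < Real.log 2 := Real.log_two_gt_d9
  set s := Real.sqrt p with hs
  set t := Real.sqrt q with htt
  have hs0 : 0 ≤ s := Real.sqrt_nonneg _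
  have ht0 : 0 ≤ t := Real.sqrt_nonneg _
  have hs2 : s^2 = p := Real.sq_sqrt hp
  have ht2 : t^2 = q := Real.sq_sqrt hq
  have hst1 : s^2 + t^2 = 1 := by rw [hs2, ht2]; exact hpq
  rcases eq_or_lt_of_le hp with h0 | hp0
  · -- p = 0
    have hq1 : q = 1 := by linarith
    have hs' : s = 0 := by rw [hs, ← h0, Real.sqrt_zero]
    have ht' : t = 1 := by rw [htt, hq1, Real.sqrt_one]
    rw [hs', ht', ← h0]
    norm_num
    nlinarith
  · have hp1 : p ≤ 1 := by linarith
    rcases le_or_gt p (1/2) with hhalf | hhalf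
    · -- Branch I : 0 < p ≤ 1/2
      have hA := sq_sub_one_le_log (x := 2*p) (by linarith) (by linarith)
      have hplog : (4*p^2 - 1)/4 ≤ p * Real.log (2*p) := by
        have h := mul_le_mul_of_nonneg_left hA hp0.le
        have e : p * (((2*p)^2 - 1)/(2*(2*p))) = (4*p^2-1)/4 := by
          field_simp
          ring
        linarith [e ▸ h]
      have hXe : (1 - 2*p)^2 - (s-t)^2 - 2*(s*t)*(s-t)^2
          = (-2*(s*t) + 4*s^2 - 1) * (s^2 + t^2 - 1) := by
        rw [← hs2]; ring
      have hX : (s-t)^2 ≤ (1 - 2*p)^2 := by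
        have h1 : 0 ≤ 2*(s*t)*(s-t)^2 :=
          mul_nonneg (by positivity) (sq_nonneg _)
        have h2 : s^2 + t^2 - 1 = 0 := by rw [hst1]; ring
        rw [h2, mul_zero] at hXe
        linarith
      have hc1 : 0 ≤ (2*Real.log 2 - 1)/2 := by nlinarith
      have hc2 : (2*Real.log 2 - 1)/2 ≤ 1/4 := by nlinarith
      have hchain : (2*Real.log 2 - 1)/2 * (s-t)^2 ≤ 1/4 * (1-2*p)^2 := by
        have := mul_le_mul hc2 hX (sq_nonneg _) (by norm_num)
        linarith
      nlinarith [hchain, hplog]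
    · -- Branch II : 1/2 < p ≤ 1
      -- Taylor lower bound for log(2p) = log(1 + (2p-1))
      have hB := taylor_le_log_one_add (v := 2*p - 1) (by linarith)
      rw [show (1:ℝ) + (2*p-1) = 2*p by ring] at hB
      -- log 2 upper bound : p log 2 ≤ p log(2p) + 1 − p
      have hlogmul : Real.log (2*p) = Real.log 2 + Real.log p :=
        Real.log_mul two_ne_zero (ne_of_gt hp0)
      have hinv : Real.log p⁻¹ ≤ p⁻¹ - 1 := Real.log_le_sub_one_of_pos (by positivity)
      rw [Real.log_inv] at hinv
      have hU : p * Real.log 2 ≤ p * Real.log (2*p) + 1 - p := by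
        have h3 : p * (-Real.log p) ≤ p * (p⁻¹ - 1) :=
          mul_le_mul_of_nonneg_left hinv hp0.le
        have h4 : p * (p⁻¹ - 1) = 1 - p := by field_simp
        have h5 : p * Real.log 2 = p * Real.log (2*p) - p * Real.log p := by
          rw [hlogmul]; ring
        rw [h4] at h3
        linarith
      -- Hellinger-term bound : (s−t)² (2 − (2p−1)²) ≤ (2p−1)²
      have h2st : 2*(s*t) ≤ 1 := by nlinarith [sq_nonneg (s-t)]
      have hXe : (2*s^2-1)^2 - (s-t)^2*(2-(2*s^2-1)^2) - 2*((s-t)^2*(s*t)*(1-2*(s*t)))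
          = (4*s^2*t^2 - 8*s^3*t - 2*(s*t) + 4*s^4 + 4*s^2 - 1) * (s^2+t^2-1) := by
        ring
      have hX : (s-t)^2 * (2 - (2*p-1)^2) ≤ (2*p-1)^2 := by
        have h1 : 0 ≤ 2*((s-t)^2*(s*t)*(1-2*(s*t))) := by
          have := mul_nonneg (mul_nonneg (sq_nonneg (s-t)) (mul_nonneg hs0 ht0))
            (by linarith : (0:ℝ) ≤ 1 - 2*(s*t))
          linarith
        have h2 : s^2 + t^2 - 1 = 0 := by rw [hst1]; ring
        rw [h2, mul_zero] at hXe
        rw [← hs2]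
        linarith
      have hden : (0:ℝ) < 2 - (2*p-1)^2 := by nlinarith
      have hstep : (s-t)^2 ≤ (2*p-1)^2 / (2 - (2*p-1)^2) := (le_div_iff₀ hden).mpr hX
      have hc1 : 0 ≤ (2*Real.log 2 - 1)/2 := by nlinarith
      have main : (2*Real.log 2 - 1)/2 * ((2*p-1)^2 / (2 - (2*p-1)^2))
          ≤ p * Real.log (2*p) + 1/2 - p := by
        rw [← mul_div_assoc, div_le_iff₀ hden]
        have h8 : 0 ≤ 8 - 26/3*p + 44/3*p^2 + 8/3*p^3 - 16*p^4 := by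
          nlinarith [sq_nonneg (p - 1/2), sq_nonneg (1-p), mul_nonneg (sub_nonneg.mpr hhalf.le) (sub_nonneg.mpr hp1), sq_nonneg p]
        have hG : 0 ≤ (p - 1/2)^3 * (1-p) * (8 - 26/3*p + 44/3*p^2 + 8/3*p^3 - 16*p^4) :=
          mul_nonneg (mul_nonneg (pow_nonneg (by linarith) 3) (by linarith)) h8
        have hCnn : 0 ≤ p*(1-p)*(4*p^2 + 4*p - 1) :=
          mul_nonneg (mul_nonneg hp0.le (by linarith)) (by nlinarith)
        have t2 : 0 ≤ (p*(1-p)*(4*p^2+4*p-1)) *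
            (Real.log (2*p) - ((2*p-1) - (2*p-1)^2/2 + (2*p-1)^3/3 - (2*p-1)^4/4)) :=
          mul_nonneg hCnn (by linarith)
        have t1 : 0 ≤ (2*p-1)^2 * (p * Real.log (2*p) + 1 - p - p * Real.log 2) :=
          mul_nonneg (sq_nonneg _) (by linarith)
        have hid : p * ((p * Real.log (2*p) + 1/2 - p) * (2 - (2*p-1)^2)
              - (2*Real.log 2 - 1)/2 * (2*p-1)^2)
            = (2*p-1)^2 * (p * Real.log (2*p) + 1 - p - p * Real.log 2)
              + (p*(1-p)*(4*p^2+4*p-1)) *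
                (Real.log (2*p) - ((2*p-1) - (2*p-1)^2/2 + (2*p-1)^3/3 - (2*p-1)^4/4))
              + (p - 1/2)^3 * (1-p) * (8 - 26/3*p + 44/3*p^2 + 8/3*p^3 - 16*p^4) := by
          ring
        have hpd : 0 ≤ p * ((p * Real.log (2*p) + 1/2 - p) * (2 - (2*p-1)^2)
              - (2*Real.log 2 - 1)/2 * (2*p-1)^2) := by
          rw [hid]; linarith
        have hD : 0 ≤ (p * Real.log (2*p) + 1/2 - p) * (2 - (2*p-1)^2)
              - (2*Real.log 2 - 1)/2 * (2*p-1)^2 := by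
          by_contra hcon
          push_neg at hcon
          nlinarith
        linarith
      calc (2*Real.log 2 - 1)/2 * (s-t)^2
          ≤ (2*Real.log 2 - 1)/2 * ((2*p-1)^2 / (2 - (2*p-1)^2)) :=
            mul_le_mul_of_nonneg_left hstep hc1
        _ ≤ p * Real.log (2*p) + 1/2 - p := main

/-- for probability measures `P, Q`,
`KL(P, (P+Q)/2) ≥ (2 log 2 − 1) H²(P,Q)`, and whenever `P ≪ Q`,
`2 H²(P,Q) ≤ KL(P,Q)`. -/
theorem kl_hellinger_bounds {Ω : Type*} [MeasurableSpace Ω] (P Q : Measure Ω)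
    [IsProbabilityMeasure P] [IsProbabilityMeasure Q] :
    ENNReal.ofReal ((2 * Real.log 2 - 1) * sqHellinger P Q) ≤
      klDiv' P (((2 : ℝ≥0∞))⁻¹ • (P + Q)) ∧
    (P ≪ Q → ENNReal.ofReal (2 * sqHellinger P Q) ≤ klDiv' P Q) := by
  set μ : Measure Ω := P + Q with hμ
  have hPμ : P ≪ μ := Measure.absolutelyContinuous_of_le (Measure.le_add_right le_rfl)
  have hQμ : Q ≪ μ := Measure.absolutelyContinuous_of_le (Measure.le_add_left le_rfl)
  -- a.e. facts
  have hsum : ∀ᵐ ω ∂μ, P.rnDeriv μ ω + Q.rnDeriv μ ω = 1 := by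
    have h1 := Measure.rnDeriv_add P Q μ
    have h2 := Measure.rnDeriv_self μ
    filter_upwards [h1, h2] with ω e1 e2
    simp only [Pi.add_apply] at e1
    rw [← e1]
    exact e2
  have hf_lt := Measure.rnDeriv_lt_top P μ
  have hg_lt := Measure.rnDeriv_lt_top Q μ
  have haeμ : ∀ᵐ ω ∂μ, (P.rnDeriv μ ω).toReal + (Q.rnDeriv μ ω).toReal = 1 := by
    filter_upwards [hsum, hf_lt, hg_lt] with ω h1 h2 h3
    rw [← ENNReal.toReal_add h2.ne h3.ne, h1, ENNReal.toReal_one]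
  -- measurability / integrability
  have hmes_p : Measurable fun ω => (P.rnDeriv μ ω).toReal :=
    (Measure.measurable_rnDeriv P μ).ennreal_toReal
  have hmes_q : Measurable fun ω => (Q.rnDeriv μ ω).toReal :=
    (Measure.measurable_rnDeriv Q μ).ennreal_toReal
  have hIp : Integrable (fun ω => (P.rnDeriv μ ω).toReal) μ :=
    Measure.integrable_toReal_rnDeriv
  have hIq : Integrable (fun ω => (Q.rnDeriv μ ω).toReal) μ :=
    Measure.integrable_toReal_rnDeriv
  have hIX : Integrable (fun ω => (Real.sqrt ((P.rnDeriv μ ω).toReal) -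
      Real.sqrt ((Q.rnDeriv μ ω).toReal))^2) μ := by
    refine Integrable.mono' (integrable_const (2:ℝ)) ?_ ?_
    · exact ((hmes_p.sqrt.sub hmes_q.sqrt).pow_const 2).aestronglyMeasurable
    · filter_upwards [haeμ] with ω h1
      have hp0 : 0 ≤ (P.rnDeriv μ ω).toReal := ENNReal.toReal_nonneg
      have hq0 : 0 ≤ (Q.rnDeriv μ ω).toReal := ENNReal.toReal_nonneg
      rw [Real.norm_eq_abs, abs_of_nonneg (sq_nonneg _)]
      nlinarith [Real.sq_sqrt hp0, Real.sq_sqrt hq0,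
        sq_nonneg (Real.sqrt ((P.rnDeriv μ ω).toReal) + Real.sqrt ((Q.rnDeriv μ ω).toReal))]
  have hμuniv : (μ Set.univ).toReal = 2 := by
    have : μ Set.univ = 2 := by
      rw [hμ, Measure.add_apply, measure_univ, measure_univ]
      norm_num
    rw [this]
    norm_num
  have hintp : ∫ ω, (P.rnDeriv μ ω).toReal ∂μ = 1 := by
    rw [Measure.integral_toReal_rnDeriv hPμ, measureReal_def, measure_univ, ENNReal.toReal_one]
  have hintq : ∫ ω, (Q.rnDeriv μ ω).toReal ∂μ = 1 := by
    rw [Measure.integral_toReal_rnDeriv hQμ, measureReal_def, measure_univ, ENNReal.toReal_one]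
  have hsqH : sqHellinger P Q = (1/2) * ∫ ω, (Real.sqrt ((P.rnDeriv μ ω).toReal) -
      Real.sqrt ((Q.rnDeriv μ ω).toReal))^2 ∂μ := by
    simp only [sqHellinger, ← hμ]
  constructor
  · -- Part 1 : KL(P, (P+Q)/2) ≥ (2 log 2 − 1) H²
    by_cases hcond : P ≪ ((2:ℝ≥0∞)⁻¹ • μ) ∧
        Integrable (fun ω => Real.log ((P.rnDeriv ((2:ℝ≥0∞)⁻¹ • μ) ω).toReal)) P
    · obtain ⟨habsM, hintM⟩ := hcond
      simp only [klDiv', if_pos (And.intro habsM hintM)]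
      -- identify the density
      have hMd : P.rnDeriv ((2:ℝ≥0∞)⁻¹ • μ) =ᵐ[μ] fun ω => 2 * P.rnDeriv μ ω := by
        have h := Measure.rnDeriv_smul_right_of_ne_top P μ (r := (2:ℝ≥0∞)⁻¹)
          (by simp) (by simp)
        filter_upwards [h] with ω hω
        rw [hω]
        simp [inv_inv]
      have heq : (fun ω => Real.log ((P.rnDeriv ((2:ℝ≥0∞)⁻¹ • μ) ω).toReal)) =ᵐ[P]
          (fun ω => Real.log (2 * (P.rnDeriv μ ω).toReal)) := by
        filter_upwards [hPμ.ae_le hMd] with ω h1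
        rw [h1, ENNReal.toReal_mul]
        norm_num
      have hIlog : Integrable (fun ω => Real.log (2*(P.rnDeriv μ ω).toReal)) P :=
        hintM.congr heq
      have hIplog : Integrable
          (fun ω => (P.rnDeriv μ ω).toReal * Real.log (2*(P.rnDeriv μ ω).toReal)) μ := by
        have := (MeasureTheory.integrable_rnDeriv_smul_iff hPμ).mpr hIlog
        simpa [smul_eq_mul] using this
      have hint_eq : ∫ ω, Real.log ((P.rnDeriv ((2:ℝ≥0∞)⁻¹ • μ) ω).toReal) ∂P
          = ∫ ω, (P.rnDeriv μ ω).toReal * Real.log (2*(P.rnDeriv μ ω).toReal) ∂μ := by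
        rw [integral_congr_ae heq, ← MeasureTheory.integral_rnDeriv_smul hPμ]
        simp [smul_eq_mul]
      apply ENNReal.ofReal_le_ofReal
      rw [hint_eq, hsqH]
      have hkey : 0 ≤ ∫ ω, ((P.rnDeriv μ ω).toReal * Real.log (2*(P.rnDeriv μ ω).toReal)
            + (1/2 - (P.rnDeriv μ ω).toReal)
            - (2*Real.log 2 - 1)/2 * (Real.sqrt ((P.rnDeriv μ ω).toReal) -
                Real.sqrt ((Q.rnDeriv μ ω).toReal))^2) ∂μ := by
        apply integral_nonneg_of_ae
        filter_upwards [haeμ] with ω h1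
        simp only [Pi.zero_apply]
        have := pointwise_one (p := (P.rnDeriv μ ω).toReal) (q := (Q.rnDeriv μ ω).toReal)
          ENNReal.toReal_nonneg ENNReal.toReal_nonneg h1
        linarith
      have hsplit : ∫ ω, ((P.rnDeriv μ ω).toReal * Real.log (2*(P.rnDeriv μ ω).toReal)
            + (1/2 - (P.rnDeriv μ ω).toReal)
            - (2*Real.log 2 - 1)/2 * (Real.sqrt ((P.rnDeriv μ ω).toReal) -
                Real.sqrt ((Q.rnDeriv μ ω).toReal))^2) ∂μ
          = (∫ ω, (P.rnDeriv μ ω).toReal * Real.log (2*(P.rnDeriv μ ω).toReal) ∂μ)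
            + ((∫ ω, (1/2 : ℝ) ∂μ) - ∫ ω, (P.rnDeriv μ ω).toReal ∂μ)
            - (2*Real.log 2 - 1)/2 * ∫ ω, (Real.sqrt ((P.rnDeriv μ ω).toReal) -
                Real.sqrt ((Q.rnDeriv μ ω).toReal))^2 ∂μ := by
        have hAB : Integrable (fun ω => (P.rnDeriv μ ω).toReal *
            Real.log (2*(P.rnDeriv μ ω).toReal) + (1/2 - (P.rnDeriv μ ω).toReal)) μ := by
          exact hIplog.add ((integrable_const _).sub hIp)
        have hB : Integrable (fun ω => (1/2 : ℝ) - (P.rnDeriv μ ω).toReal) μ := by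
          exact (integrable_const _).sub hIp
        have hC : Integrable (fun ω => (2*Real.log 2 - 1)/2 *
            (Real.sqrt ((P.rnDeriv μ ω).toReal) - Real.sqrt ((Q.rnDeriv μ ω).toReal))^2) μ := by
          exact hIX.const_mul _
        rw [integral_sub hAB hC, integral_add hIplog hB,
          integral_sub (integrable_const _) hIp, integral_const_mul]
      rw [hsplit] at hkey
      have hhalfint : ∫ ω, (1/2 : ℝ) ∂μ = 1 := by
        rw [integral_const, measureReal_def, hμuniv]
        norm_num
      rw [hhalfint, hintp] at hkey
      linarith
    · simp only [klDiv', if_neg hcond]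
      exact le_top
  · -- Part 2 : 2 H² ≤ KL(P, Q) when P ≪ Q
    intro habs
    by_cases hcond : P ≪ Q ∧ Integrable (fun ω => Real.log ((P.rnDeriv Q ω).toReal)) P
    · obtain ⟨_, hintQ⟩ := hcond
      simp only [klDiv', if_pos (And.intro habs hintQ)]
      have hchain : P.rnDeriv Q * Q.rnDeriv μ =ᵐ[μ] P.rnDeriv μ :=
        Measure.rnDeriv_mul_rnDeriv habs
      have hgpos_q : ∀ᵐ ω ∂Q, 0 < Q.rnDeriv μ ω := Measure.rnDeriv_pos hQμ
      have hgposμ : ∀ᵐ ω ∂μ, 0 < Q.rnDeriv μ ω := by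
        rw [hμ, ae_add_measure_iff]
        exact ⟨habs.ae_le hgpos_q, hgpos_q⟩
      have hratio : ∀ᵐ ω ∂μ, (P.rnDeriv Q ω).toReal
          = (P.rnDeriv μ ω).toReal / (Q.rnDeriv μ ω).toReal := by
        filter_upwards [hchain, hgposμ, hf_lt, hg_lt] with ω h1 h2 h3 h4
        simp only [Pi.mul_apply] at h1
        have hgt : 0 < (Q.rnDeriv μ ω).toReal := ENNReal.toReal_pos h2.ne' h4.ne
        rw [← h1, ENNReal.toReal_mul, mul_div_cancel_right₀ _ (ne_of_gt hgt)]
      have heq : (fun ω => Real.log ((P.rnDeriv Q ω).toReal)) =ᵐ[P]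
          (fun ω => Real.log ((P.rnDeriv μ ω).toReal / (Q.rnDeriv μ ω).toReal)) := by
        filter_upwards [hPμ.ae_le hratio] with ω h1
        rw [h1]
      have hIlog : Integrable
          (fun ω => Real.log ((P.rnDeriv μ ω).toReal / (Q.rnDeriv μ ω).toReal)) P :=
        hintQ.congr heq
      have hIplog : Integrable (fun ω => (P.rnDeriv μ ω).toReal *
          Real.log ((P.rnDeriv μ ω).toReal / (Q.rnDeriv μ ω).toReal)) μ := by
        have := (MeasureTheory.integrable_rnDeriv_smul_iff hPμ).mpr hIlog
        simpa [smul_eq_mul] using this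
      have hint_eq : ∫ ω, Real.log ((P.rnDeriv Q ω).toReal) ∂P
          = ∫ ω, (P.rnDeriv μ ω).toReal *
              Real.log ((P.rnDeriv μ ω).toReal / (Q.rnDeriv μ ω).toReal) ∂μ := by
        rw [integral_congr_ae heq, ← MeasureTheory.integral_rnDeriv_smul hPμ]
        simp [smul_eq_mul]
      apply ENNReal.ofReal_le_ofReal
      rw [hint_eq, hsqH]
      have hkey : 0 ≤ ∫ ω, ((P.rnDeriv μ ω).toReal *
            Real.log ((P.rnDeriv μ ω).toReal / (Q.rnDeriv μ ω).toReal)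
            + ((Q.rnDeriv μ ω).toReal - (P.rnDeriv μ ω).toReal)
            - (Real.sqrt ((P.rnDeriv μ ω).toReal) -
                Real.sqrt ((Q.rnDeriv μ ω).toReal))^2) ∂μ := by
        apply integral_nonneg_of_ae
        filter_upwards [hgposμ, hg_lt] with ω h1 h2
        simp only [Pi.zero_apply]
        have hq0 : 0 < (Q.rnDeriv μ ω).toReal := ENNReal.toReal_pos h1.ne' h2.ne
        have := pointwise_two (p := (P.rnDeriv μ ω).toReal) (q := (Q.rnDeriv μ ω).toReal)
          ENNReal.toReal_nonneg hq0
        linarith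
      have hsplit : ∫ ω, ((P.rnDeriv μ ω).toReal *
            Real.log ((P.rnDeriv μ ω).toReal / (Q.rnDeriv μ ω).toReal)
            + ((Q.rnDeriv μ ω).toReal - (P.rnDeriv μ ω).toReal)
            - (Real.sqrt ((P.rnDeriv μ ω).toReal) -
                Real.sqrt ((Q.rnDeriv μ ω).toReal))^2) ∂μ
          = (∫ ω, (P.rnDeriv μ ω).toReal *
              Real.log ((P.rnDeriv μ ω).toReal / (Q.rnDeriv μ ω).toReal) ∂μ)
            + ((∫ ω, (Q.rnDeriv μ ω).toReal ∂μ) - ∫ ω, (P.rnDeriv μ ω).toReal ∂μ)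
            - ∫ ω, (Real.sqrt ((P.rnDeriv μ ω).toReal) -
                Real.sqrt ((Q.rnDeriv μ ω).toReal))^2 ∂μ := by
        have hAB : Integrable (fun ω => (P.rnDeriv μ ω).toReal *
            Real.log ((P.rnDeriv μ ω).toReal / (Q.rnDeriv μ ω).toReal)
            + ((Q.rnDeriv μ ω).toReal - (P.rnDeriv μ ω).toReal)) μ := by
          exact hIplog.add (hIq.sub hIp)
        have hB : Integrable (fun ω => (Q.rnDeriv μ ω).toReal - (P.rnDeriv μ ω).toReal) μ := by
          exact hIq.sub hIp
        rw [integral_sub hAB hIX, integral_add hIplog hB, integral_sub hIq hIp]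
      rw [hsplit, hintp, hintq] at hkey
      linarith
    · simp only [klDiv', if_neg hcond]
      exact le_top
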